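/- Let b, τ be real numbers with sin(b·τ) ≠ 0, let z ∈ ℂ, and let v : ℝ → ℝ satisfy v(t) − 2·Re(e^{ibt}·z) − t^{−1/2}·|z|² = O(t^{−1}) as t → ∞. Define z̃ : ℝ → ℂ by z̃(t) := (v(t+τ)·e^{−ibt} − v(t)·e^{−ib(t+τ)}) / (2i·sin(bτ)), and define ẑ : ℝ → ℂ by ẑ(t) := (W₂(t)·e^{−ibt} − W₁(t)·e^{−ib(t+τ)}) / (2i·sin(bτ)), where W₁(t) := v(t) − t^{−1/2}·|z̃(t)|² and W₂(t) := v(t+τ) − (t+τ)^{−1/2}·|z̃(t)|². Then z̃(t) − z = O(t^{−1/2}) and ẑ(t) − z = O(t^{−1}) as t → ∞. -/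

import Mathlib

open Filter Asymptotics

/-- The remainder function. -/
noncomputable def auxR (b : ℝ) (z : ℂ) (v : ℝ → ℝ) (t : ℝ) : ℝ :=
  v t - 2 * (Complex.exp (Complex.I * (b * t)) * z).re
    - t ^ (-(1 / 2 : ℝ)) * ‖z‖ ^ 2

/-- The modulus-difference function. -/
noncomputable def auxD (z : ℂ) (zt : ℝ → ℂ) (t : ℝ) : ℝ :=
  ‖zt t‖ - ‖z‖

lemma core_real (p q : ℝ) (z : ℂ) :
    ((2 * (Complex.exp (Complex.I * ((p + q : ℝ) : ℂ)) * z).re : ℝ) : ℂ)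
        * Complex.exp (-(Complex.I * (p : ℂ)))
      - ((2 * (Complex.exp (Complex.I * (p : ℂ)) * z).re : ℝ) : ℂ)
        * Complex.exp (-(Complex.I * ((p + q : ℝ) : ℂ)))
    = 2 * Complex.I * (Real.sin q : ℂ) * z := by
  have h2re : ∀ w : ℂ, ((2 * w.re : ℝ) : ℂ) = w + (starRingEnd ℂ) w := by
    intro w; rw [← Complex.add_conj]
  have hconj : ∀ x : ℝ, (starRingEnd ℂ) (Complex.exp (Complex.I * (x : ℂ)) * z)
      = Complex.exp (-(Complex.I * (x : ℂ))) * (starRingEnd ℂ) z := by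
    intro x; rw [map_mul, ← Complex.exp_conj]; simp [Complex.conj_I]
  have hsin : (2 : ℂ) * Complex.I * (Real.sin q : ℂ)
      = Complex.exp (Complex.I * (q : ℂ)) - Complex.exp (-(Complex.I * (q : ℂ))) := by
    rw [Complex.ofReal_sin, Complex.sin]
    rw [show ((-(q:ℂ) * Complex.I)) = -(Complex.I * (q : ℂ)) by ring,
        show (((q:ℂ) * Complex.I)) = Complex.I * (q : ℂ) by ring]
    linear_combination (Complex.exp (-(Complex.I * (q : ℂ)))
      - Complex.exp (Complex.I * (q : ℂ))) * Complex.I_sq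
  have e1 : Complex.exp (Complex.I * ((p + q : ℝ) : ℂ))
      * Complex.exp (-(Complex.I * (p : ℂ)))
      = Complex.exp (Complex.I * (q : ℂ)) := by
    rw [← Complex.exp_add]; congr 1; push_cast; ring
  have e2 : Complex.exp (Complex.I * (p : ℂ))
      * Complex.exp (-(Complex.I * ((p + q : ℝ) : ℂ)))
      = Complex.exp (-(Complex.I * (q : ℂ))) := by
    rw [← Complex.exp_add]; congr 1; push_cast; ring
  rw [h2re, h2re, hconj, hconj, hsin]
  linear_combination z * e1 - z * e2

lemma core_id (b τ t : ℝ) (z : ℂ) :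
    ((2 * (Complex.exp (Complex.I * (b * (t + τ))) * z).re : ℝ) : ℂ)
        * Complex.exp (-(Complex.I * (b * t)))
      - ((2 * (Complex.exp (Complex.I * (b * t)) * z).re : ℝ) : ℂ)
        * Complex.exp (-(Complex.I * (b * (t + τ))))
    = 2 * Complex.I * (Real.sin (b * τ) : ℂ) * z := by
  have h := core_real (b * t) (b * τ) z
  rw [show ((b : ℂ) * ((t : ℂ) + (τ : ℂ))) = ((b * t + b * τ : ℝ) : ℂ) by push_cast; ring,
      show ((b : ℂ) * (t : ℂ)) = ((b * t : ℝ) : ℂ) by push_cast; ring]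
  exact h

lemma key_id (b τ : ℝ) (hτ : Real.sin (b * τ) ≠ 0) (z : ℂ) (a₁ a₂ t : ℝ) :
    ((a₂ : ℂ) * Complex.exp (-(Complex.I * (b * t)))
      - (a₁ : ℂ) * Complex.exp (-(Complex.I * (b * (t + τ)))))
      / (2 * Complex.I * (Real.sin (b * τ) : ℂ)) - z
    = (((a₂ - 2 * (Complex.exp (Complex.I * (b * (t + τ))) * z).re : ℝ) : ℂ)
        * Complex.exp (-(Complex.I * (b * t)))
      - ((a₁ - 2 * (Complex.exp (Complex.I * (b * t)) * z).re : ℝ) : ℂ)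
        * Complex.exp (-(Complex.I * (b * (t + τ)))))
      / (2 * Complex.I * (Real.sin (b * τ) : ℂ)) := by
  have hD : (2 * Complex.I * (Real.sin (b * τ) : ℂ)) ≠ 0 :=
    mul_ne_zero (mul_ne_zero two_ne_zero Complex.I_ne_zero) (Complex.ofReal_ne_zero.mpr hτ)
  have hc := core_id b τ t z
  have hnum : (((a₂ - 2 * (Complex.exp (Complex.I * (b * (t + τ))) * z).re : ℝ) : ℂ)
        * Complex.exp (-(Complex.I * (b * t)))
      - ((a₁ - 2 * (Complex.exp (Complex.I * (b * t)) * z).re : ℝ) : ℂ)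
        * Complex.exp (-(Complex.I * (b * (t + τ)))))
      = ((a₂ : ℂ) * Complex.exp (-(Complex.I * (b * t)))
        - (a₁ : ℂ) * Complex.exp (-(Complex.I * (b * (t + τ)))))
        - 2 * Complex.I * (Real.sin (b * τ) : ℂ) * z := by
    rw [Complex.ofReal_sub, Complex.ofReal_sub]
    linear_combination -hc
  rw [hnum, sub_div, sub_div, sub_div, mul_div_cancel_left₀ z hD]

lemma rpow_shift_isBigO (τ s : ℝ) (hs : s ≤ 0) :
    (fun t : ℝ => (t + τ) ^ s) =O[atTop] fun t : ℝ => t ^ s := by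
  apply IsBigO.of_bound ((2 : ℝ) ^ (-s))
  filter_upwards [eventually_ge_atTop (max 1 (2 * |τ|))] with t ht
  have ht1 : (1 : ℝ) ≤ t := le_trans (le_max_left _ _) ht
  have ht2 : 2 * |τ| ≤ t := le_trans (le_max_right _ _) ht
  have htpos : 0 < t := lt_of_lt_of_le one_pos ht1
  have h2 : t / 2 ≤ t + τ := by
    have h3 := neg_abs_le τ
    linarith
  have h2pos : (0:ℝ) < t / 2 := by positivity
  have hkey : (t + τ) ^ s ≤ (t / 2) ^ s := Real.rpow_le_rpow_of_nonpos h2pos h2 hs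
  have hdiv : (t / 2) ^ s = 2 ^ (-s) * t ^ s := by
    rw [Real.div_rpow htpos.le (by norm_num), Real.rpow_neg (by norm_num)]
    field_simp
  rw [Real.norm_eq_abs, Real.norm_eq_abs,
      _root_.abs_of_nonneg (Real.rpow_nonneg (by linarith) s),
      _root_.abs_of_nonneg (Real.rpow_nonneg htpos.le s)]
  calc (t + τ) ^ s ≤ (t / 2) ^ s := hkey
    _ = 2 ^ (-s) * t ^ s := hdiv

lemma rpow_exp_isBigO (p q : ℝ) (h : p ≤ q) :
    (fun t : ℝ => t ^ p) =O[atTop] fun t : ℝ => t ^ q := by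
  apply IsBigO.of_bound 1
  filter_upwards [eventually_ge_atTop (1 : ℝ)] with t ht
  rw [Real.norm_eq_abs, Real.norm_eq_abs, one_mul,
      _root_.abs_of_nonneg (Real.rpow_nonneg (by linarith) p),
      _root_.abs_of_nonneg (Real.rpow_nonneg (by linarith) q)]
  exact Real.rpow_le_rpow_of_exponent_le ht h

lemma ofReal_isBigO {f : ℝ → ℝ} {g : ℝ → ℝ} (h : f =O[atTop] g) :
    (fun t : ℝ => ((f t : ℝ) : ℂ)) =O[atTop] g := by
  refine isBigO_norm_left.mp ?_
  simpa [Complex.norm_real] using h.norm_left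

lemma exp_bd (g : ℝ → ℂ) (hg : ∀ t, (g t).re = 0) :
    (fun t : ℝ => Complex.exp (g t)) =O[atTop] fun _ : ℝ => (1 : ℝ) := by
  apply IsBigO.of_bound 1
  filter_upwards with t
  simp [Complex.norm_exp, hg t]

lemma half_sq_eventuallyEq :
    (fun t : ℝ => t ^ (-(1/2 : ℝ)) * t ^ (-(1/2 : ℝ)))
      =ᶠ[atTop] fun t : ℝ => t ^ (-1 : ℝ) := by
  filter_upwards [eventually_gt_atTop (0 : ℝ)] with t ht
  rw [← Real.rpow_add ht]
  norm_num

lemma mul_one_ev (q : ℝ) :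
    (fun t : ℝ => t ^ q * 1) =ᶠ[atTop] fun t : ℝ => t ^ q := by
  filter_upwards with t; rw [mul_one]

theorem revised_twoPoint_phase_retrieval
    (b τ : ℝ) (hτ : Real.sin (b * τ) ≠ 0) (z : ℂ) (v : ℝ → ℝ)
    (hv : (fun t : ℝ => v t - 2 * (Complex.exp (Complex.I * (b * t)) * z).re
            - t ^ (-(1 / 2 : ℝ)) * ‖z‖ ^ 2)
        =O[atTop] fun t : ℝ => t ^ (-1 : ℝ))
    (ztilde zhat : ℝ → ℂ) (W₁ W₂ : ℝ → ℝ)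
    (hzt : ∀ t : ℝ, ztilde t =
      ((v (t + τ) : ℂ) * Complex.exp (-(Complex.I * (b * t)))
        - (v t : ℂ) * Complex.exp (-(Complex.I * (b * (t + τ)))))
        / (2 * Complex.I * (Real.sin (b * τ) : ℂ)))
    (hW₁ : ∀ t : ℝ, W₁ t = v t - t ^ (-(1 / 2 : ℝ)) * ‖ztilde t‖ ^ 2)
    (hW₂ : ∀ t : ℝ, W₂ t = v (t + τ) - (t + τ) ^ (-(1 / 2 : ℝ)) * ‖ztilde t‖ ^ 2)
    (hzh : ∀ t : ℝ, zhat t =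
      ((W₂ t : ℂ) * Complex.exp (-(Complex.I * (b * t)))
        - (W₁ t : ℂ) * Complex.exp (-(Complex.I * (b * (t + τ)))))
        / (2 * Complex.I * (Real.sin (b * τ) : ℂ))) :
    ((fun t : ℝ => ztilde t - z) =O[atTop] fun t : ℝ => t ^ (-(1 / 2 : ℝ))) ∧
    ((fun t : ℝ => zhat t - z) =O[atTop] fun t : ℝ => t ^ (-1 : ℝ)) := by
  have hle : (-1 : ℝ) ≤ -(1/2 : ℝ) := by norm_num
  have hle2 : (-(1/2 : ℝ)) ≤ (0 : ℝ) := by norm_num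
  have hvr : (fun t : ℝ => auxR b z v t) =O[atTop] (fun t : ℝ => t ^ (-1 : ℝ)) := hv
  have hshift : Tendsto (fun t : ℝ => t + τ) atTop atTop :=
    tendsto_atTop_add_const_right atTop τ tendsto_id
  have hr2 : (fun t : ℝ => auxR b z v (t + τ)) =O[atTop] (fun t : ℝ => t ^ (-1 : ℝ)) :=
    (hvr.comp_tendsto hshift).trans (rpow_shift_isBigO τ (-1) (by norm_num))
  have hE1 : (fun t : ℝ => Complex.exp (-(Complex.I * ((b : ℂ) * (t : ℂ)))))
      =O[atTop] (fun _ : ℝ => (1 : ℝ)) :=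
    exp_bd _ (fun t => by simp)
  have hE2 : (fun t : ℝ => Complex.exp (-(Complex.I * ((b : ℂ) * ((t : ℂ) + (τ : ℂ))))))
      =O[atTop] (fun _ : ℝ => (1 : ℝ)) :=
    exp_bd _ (fun t => by simp)
  have hDinv : (fun _ : ℝ => (2 * Complex.I * (Real.sin (b * τ) : ℂ))⁻¹)
      =O[atTop] (fun _ : ℝ => (1 : ℝ)) :=
    isBigO_const_const _ one_ne_zero _
  -- Part 1
  have q1 : (fun t : ℝ => auxR b z v (t + τ) + ‖z‖ ^ 2 * (t + τ) ^ (-(1/2 : ℝ)))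
      =O[atTop] (fun t : ℝ => t ^ (-(1/2 : ℝ))) :=
    (hr2.trans (rpow_exp_isBigO _ _ hle)).add
      ((rpow_shift_isBigO τ _ hle2).const_mul_left _)
  have q0 : (fun t : ℝ => auxR b z v t + ‖z‖ ^ 2 * t ^ (-(1/2 : ℝ)))
      =O[atTop] (fun t : ℝ => t ^ (-(1/2 : ℝ))) :=
    (hvr.trans (rpow_exp_isBigO _ _ hle)).add
      ((isBigO_refl (fun t : ℝ => t ^ (-(1/2 : ℝ))) atTop).const_mul_left _)
  have N1 := ((((ofReal_isBigO q1).mul hE1).trans_eventuallyEq (mul_one_ev _)).sub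
      (((ofReal_isBigO q0).mul hE2).trans_eventuallyEq (mul_one_ev _)))
  have M1 := (N1.mul hDinv).trans_eventuallyEq (mul_one_ev (-(1/2 : ℝ)))
  have part1 : (fun t : ℝ => ztilde t - z) =O[atTop] (fun t : ℝ => t ^ (-(1/2 : ℝ))) := by
    refine M1.congr_left fun t => ?_
    have e1 : auxR b z v (t + τ) + ‖z‖ ^ 2 * (t + τ) ^ (-(1/2 : ℝ))
        = v (t + τ) - 2 * (Complex.exp (Complex.I * (b * (t + τ))) * z).re := by
      simp only [auxR]; push_cast; ring
    have e0 : auxR b z v t + ‖z‖ ^ 2 * t ^ (-(1/2 : ℝ))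
        = v t - 2 * (Complex.exp (Complex.I * (b * t)) * z).re := by
      simp only [auxR]; ring
    rw [hzt t, key_id b τ hτ z (v t) (v (t + τ)) t, e1, e0]
    exact (div_eq_mul_inv _ _).symm
  -- Part 2
  have hd : (fun t : ℝ => auxD z ztilde t) =O[atTop] (fun t : ℝ => ztilde t - z) := by
    apply IsBigO.of_bound 1
    filter_upwards with t
    rw [one_mul]
    simpa [auxD, Real.norm_eq_abs] using
      abs_norm_sub_norm_le (ztilde t) z
  have hd' := hd.trans part1
  have hsq : (fun t : ℝ => auxD z ztilde t * auxD z ztilde t)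
      =O[atTop] (fun t : ℝ => t ^ (-1 : ℝ)) :=
    (hd'.mul hd').trans_eventuallyEq half_sq_eventuallyEq
  have hdq : (fun t : ℝ => ‖z‖ ^ 2 - ‖ztilde t‖ ^ 2)
      =O[atTop] (fun t : ℝ => t ^ (-(1/2 : ℝ))) := by
    have h1 := ((hsq.trans (rpow_exp_isBigO _ _ hle)).neg_left).add
      (hd'.const_mul_left (-(2 * ‖z‖)))
    refine h1.congr_left fun t => ?_
    simp only [auxD]; ring
  have u0 : (fun t : ℝ => auxR b z v t
        + t ^ (-(1/2 : ℝ)) * (‖z‖ ^ 2 - ‖ztilde t‖ ^ 2))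
      =O[atTop] (fun t : ℝ => t ^ (-1 : ℝ)) :=
    hvr.add (((isBigO_refl (fun t : ℝ => t ^ (-(1/2 : ℝ))) atTop).mul hdq).trans_eventuallyEq
      half_sq_eventuallyEq)
  have u1 : (fun t : ℝ => auxR b z v (t + τ)
        + (t + τ) ^ (-(1/2 : ℝ)) * (‖z‖ ^ 2 - ‖ztilde t‖ ^ 2))
      =O[atTop] (fun t : ℝ => t ^ (-1 : ℝ)) :=
    hr2.add (((rpow_shift_isBigO τ _ hle2).mul hdq).trans_eventuallyEq
      half_sq_eventuallyEq)
  have N2 := ((((ofReal_isBigO u1).mul hE1).trans_eventuallyEq (mul_one_ev _)).sub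
      (((ofReal_isBigO u0).mul hE2).trans_eventuallyEq (mul_one_ev _)))
  have M2 := (N2.mul hDinv).trans_eventuallyEq (mul_one_ev (-1 : ℝ))
  have part2 : (fun t : ℝ => zhat t - z) =O[atTop] (fun t : ℝ => t ^ (-1 : ℝ)) := by
    refine M2.congr_left fun t => ?_
    have e1 : auxR b z v (t + τ)
          + (t + τ) ^ (-(1/2 : ℝ)) * (‖z‖ ^ 2 - ‖ztilde t‖ ^ 2)
        = W₂ t - 2 * (Complex.exp (Complex.I * (b * (t + τ))) * z).re := by
      rw [hW₂ t]; simp only [auxR]; push_cast; ring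
    have e0 : auxR b z v t
          + t ^ (-(1/2 : ℝ)) * (‖z‖ ^ 2 - ‖ztilde t‖ ^ 2)
        = W₁ t - 2 * (Complex.exp (Complex.I * (b * t)) * z).re := by
      rw [hW₁ t]; simp only [auxR]; ring
    rw [hzh t, key_id b τ hτ z (W₁ t) (W₂ t) t, e1, e0]
    exact (div_eq_mul_inv _ _).symm
  exact ⟨part1, part2⟩
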